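/- arXiv:2209.07633 — 3 statements merged into one kernel-verified Lean document; each statement's English description precedes it below -/
import Mathlib

section
/- Let r be a natural number with r ≥ 1. Let A_{i,j}, for 1 ≤ i < j ≤ r, be 2×2 real matrices each of whose second row is zero. Then the 2r×2r matrix J̄_{2r} + R(A_{i,j}) is invertible. -/
/-!
Order the coordinates of `ℝ^{2r}` as the first coordinates of the `r` blocks followed by
their second coordinates. Because the second rows of the `A i j` vanish (and hence the second
columns of the `-(A j i)ᵀ`), the reordered matrix `J̄ + R(A)` has the block form `[[B, U], [T, 0]]`,
where `U` is upper triangular with unit diagonal (from the `1` of `J`) and `T` is lower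
triangular with diagonal `-1`. Hence its determinant is `±1`.
-/
open Matrix

/-- The 2×2 matrix `J = [[0,1],[-1,0]]`. -/
def Jmat : Matrix (Fin 2) (Fin 2) ℝ := !![0, 1; -1, 0]

/-- The `2r × 2r` block-diagonal matrix with `r` diagonal blocks equal to `J`. -/
def Jbar (r : ℕ) : Matrix (Fin (2 * r)) (Fin (2 * r)) ℝ :=
  Matrix.of fun i j =>
    if (i : ℕ) / 2 = (j : ℕ) / 2 then
      Jmat ⟨(i : ℕ) % 2, by omega⟩ ⟨(j : ℕ) % 2, by omega⟩
    else 0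

/-- Given 2×2 matrices `A i j` (used for `i < j`), the antisymmetric `2r × 2r` block matrix
whose `(i,j)`-th 2×2 block is `A i j` for `i < j`, `-(A j i)ᵀ` for `i > j`, and `0` for
`i = j`. -/
def Rblock {r : ℕ} (A : Fin r → Fin r → Matrix (Fin 2) (Fin 2) ℝ) :
    Matrix (Fin (2 * r)) (Fin (2 * r)) ℝ :=
  Matrix.of fun x y =>
    if h : (x : ℕ) / 2 < (y : ℕ) / 2 then
      A ⟨(x : ℕ) / 2, by have := y.2; omega⟩ ⟨(y : ℕ) / 2, by have := y.2; omega⟩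
        ⟨(x : ℕ) % 2, by omega⟩ ⟨(y : ℕ) % 2, by omega⟩
    else if h' : (y : ℕ) / 2 < (x : ℕ) / 2 then
      - A ⟨(y : ℕ) / 2, by have := x.2; omega⟩ ⟨(x : ℕ) / 2, by have := x.2; omega⟩
          ⟨(y : ℕ) % 2, by omega⟩ ⟨(x : ℕ) % 2, by omega⟩
    else 0

namespace Matrix

variable {n R : Type*} [Fintype n] [DecidableEq n] [CommRing R]

theorem isUnit_fromBlocks_zero₂₂ (A : Matrix n n R) {B C : Matrix n n R}
    (hB : IsUnit B.det) (hC : IsUnit C.det) : IsUnit (fromBlocks A B C 0) := by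
  have hswap : fromBlocks A B C 0 * fromBlocks 0 1 1 0 = fromBlocks B A 0 C := by
    simp [fromBlocks_multiply]
  have hdet := congrArg det hswap
  rw [det_mul, det_fromBlocks_zero₂₁] at hdet
  rw [isUnit_iff_isUnit_det]
  exact isUnit_of_mul_isUnit_left (hdet ▸ hB.mul hC)

variable [LinearOrder n] {M : Matrix n n R}

theorem IsUpperTriangular.isUnit_det (hM : M.IsUpperTriangular) (hd : ∀ i, IsUnit (M i i)) :
    IsUnit M.det := by
  rw [det_of_isUpperTriangular hM]
  exact IsUnit.prod_univ_iff.mpr hd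

theorem IsLowerTriangular.isUnit_det (hM : M.IsLowerTriangular) (hd : ∀ i, IsUnit (M i i)) :
    IsUnit M.det := by
  rw [det_of_isLowerTriangular M hM]
  exact IsUnit.prod_univ_iff.mpr hd

end Matrix

def blockIndex {r : ℕ} (i : Fin r) (b : Fin 2) : Fin (2 * r) := ⟨2 * i + b, by omega⟩

def evenOddEquiv (r : ℕ) : Fin r ⊕ Fin r ≃ Fin (2 * r) where
  toFun := Sum.elim (blockIndex · 0) (blockIndex · 1)
  invFun x := if (x : ℕ) % 2 = 0 then .inl ⟨x / 2, by omega⟩ else .inr ⟨x / 2, by omega⟩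
  left_inv := by
    rintro (i | i)
    · simp [blockIndex]
    · simp [blockIndex, Fin.ext_iff]; omega
  right_inv x := by
    by_cases h : (x : ℕ) % 2 = 0 <;> simp [h, blockIndex, Fin.ext_iff] <;> omega

theorem Jbar_add_Rblock_blockIndex {r : ℕ} (A : Fin r → Fin r → Matrix (Fin 2) (Fin 2) ℝ)
    (i j : Fin r) (b c : Fin 2) :
    (Jbar r + Rblock A) (blockIndex i b) (blockIndex j c) =
      if i = j then Jmat b c else if i < j then A i j b c else -A j i c b := by
  have hdiv : ∀ (k : Fin r) (d : Fin 2), (2 * (k : ℕ) + d) / 2 = k := by omega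
  have hmod : ∀ (k : Fin r) (d : Fin 2), (2 * (k : ℕ) + d) % 2 = d := by omega
  simp only [Matrix.add_apply, Jbar, Rblock, of_apply, blockIndex, hdiv, hmod, Fin.eta]
  rcases lt_trichotomy i j with h | rfl | h
  · simp [h, h.ne, Fin.val_inj]
  · simp
  · simp [h.ne', h.not_gt, h.not_ge, Fin.val_inj]

def evenOddBlock {R : Type*} {r : ℕ} (N : Matrix (Fin (2 * r)) (Fin (2 * r)) R) (b c : Fin 2) :
    Matrix (Fin r) (Fin r) R :=
  of fun i j => N (blockIndex i b) (blockIndex j c)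

theorem submatrix_evenOddEquiv {R : Type*} {r : ℕ} (N : Matrix (Fin (2 * r)) (Fin (2 * r)) R) :
    N.submatrix (evenOddEquiv r) (evenOddEquiv r) =
      fromBlocks (evenOddBlock N 0 0) (evenOddBlock N 0 1)
        (evenOddBlock N 1 0) (evenOddBlock N 1 1) := by
  ext (i | i) (j | j) <;> rfl

section SecondRowsZero

variable {r : ℕ} {A : Fin r → Fin r → Matrix (Fin 2) (Fin 2) ℝ}

theorem evenOddBlock_one_one (hA : ∀ i j : Fin r, i < j → ∀ y : Fin 2, A i j 1 y = 0) :
    evenOddBlock (Jbar r + Rblock A) 1 1 = 0 := by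
  ext i j
  rw [evenOddBlock, of_apply, Jbar_add_Rblock_blockIndex]
  rcases lt_trichotomy i j with h | rfl | h
  · simp [h, h.ne, hA i j h]
  · simp [Jmat]
  · simp [h.ne', h.not_gt, hA j i h]

theorem isUpperTriangular_evenOddBlock_zero_one
    (hA : ∀ i j : Fin r, i < j → ∀ y : Fin 2, A i j 1 y = 0) :
    (evenOddBlock (Jbar r + Rblock A) 0 1).IsUpperTriangular := by
  intro i j (h : j < i)
  rw [evenOddBlock, of_apply, Jbar_add_Rblock_blockIndex]
  simp [h.ne', h.not_gt, hA j i h]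

theorem isLowerTriangular_evenOddBlock_one_zero
    (hA : ∀ i j : Fin r, i < j → ∀ y : Fin 2, A i j 1 y = 0) :
    (evenOddBlock (Jbar r + Rblock A) 1 0).IsLowerTriangular := by
  intro i j (h : i < j)
  rw [evenOddBlock, of_apply, Jbar_add_Rblock_blockIndex]
  simp [h, h.ne, hA i j h]

theorem evenOddBlock_zero_one_diag (i : Fin r) :
    evenOddBlock (Jbar r + Rblock A) 0 1 i i = 1 := by
  rw [evenOddBlock, of_apply, Jbar_add_Rblock_blockIndex, if_pos rfl]
  rfl

theorem evenOddBlock_one_zero_diag (i : Fin r) :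
    evenOddBlock (Jbar r + Rblock A) 1 0 i i = -1 := by
  rw [evenOddBlock, of_apply, Jbar_add_Rblock_blockIndex, if_pos rfl]
  rfl

end SecondRowsZero

theorem stmt_4_general (r : ℕ)
    (A : Fin r → Fin r → Matrix (Fin 2) (Fin 2) ℝ)
    (hA : ∀ i j : Fin r, i < j → ∀ y : Fin 2, A i j 1 y = 0) :
    IsUnit (Jbar r + Rblock A) := by
  rw [← isUnit_submatrix_equiv (evenOddEquiv r) (evenOddEquiv r), submatrix_evenOddEquiv,
    evenOddBlock_one_one hA]
  refine isUnit_fromBlocks_zero₂₂ _ ?_ ?_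
  · exact (isUpperTriangular_evenOddBlock_zero_one hA).isUnit_det fun i =>
      evenOddBlock_zero_one_diag i ▸ isUnit_one
  · exact (isLowerTriangular_evenOddBlock_one_zero hA).isUnit_det fun i =>
      evenOddBlock_one_zero_diag i ▸ isUnit_one.neg

/-- if each `A i j` (for `i < j`) has zero second row, then the `2r × 2r`
matrix `J̄₂ᵣ + R(A)` is invertible. -/
theorem stmt_4 (r : ℕ) (hr : 1 ≤ r)
    (A : Fin r → Fin r → Matrix (Fin 2) (Fin 2) ℝ)
    (hA : ∀ i j : Fin r, i < j → ∀ y : Fin 2, A i j 1 y = 0) :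
    IsUnit (Jbar r + Rblock A) :=
  stmt_4_general r A hA
end

section
/- Let n, r be natural numbers with 2r ≤ n, and let J̃ be the antisymmetric n×n real matrix whose top-left 2r×2r block is J̄_{2r} and whose remaining entries are 0. Let v be an antisymmetric n×n real matrix such that the matrix J̃ + s·v has rank 2r for every s ∈ ℝ. Then v_{i,j} = 0 for all indices i, j ∈ {2r+1, …, n}. -/
open Matrix

/-- The antisymmetric `n × n` matrix whose top-left `2r × 2r` block is `J̄₂ᵣ` and whose
remaining entries are `0`. -/
def Jtilde (n r : ℕ) : Matrix (Fin n) (Fin n) ℝ :=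
  Matrix.of fun i j =>
    if hi : (i : ℕ) < 2 * r then
      if hj : (j : ℕ) < 2 * r then Jbar r ⟨(i : ℕ), hi⟩ ⟨(j : ℕ), hj⟩ else 0
    else 0

lemma det_Jbar (r : ℕ) : (Jbar r).det = 1 := by
  let e2 : Fin 2 × Fin r ≃ Fin (2 * r) :=
    (Equiv.prodComm (Fin 2) (Fin r)).trans (finProdFinEquiv.trans (finCongr (by ring)))
  have key : Jbar r = (Matrix.blockDiagonal fun _ : Fin r => Jmat).submatrix e2.symm e2.symm := by
    ext i j
    have hsymm : ∀ k : Fin (2 * r), e2.symm k =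
        (⟨(k : ℕ) % 2, by omega⟩, ⟨(k : ℕ) / 2, by omega⟩) := by
      intro k
      rw [Equiv.symm_apply_eq]
      apply Fin.ext
      simp [e2, finProdFinEquiv]
      omega
    simp only [Matrix.submatrix_apply, hsymm, Matrix.blockDiagonal_apply, Jbar, Matrix.of_apply]
    by_cases h : (i : ℕ) / 2 = (j : ℕ) / 2
    · simp [h]
    · rw [if_neg h, if_neg (by simpa [Fin.ext_iff] using h)]
  rw [key, Matrix.det_submatrix_equiv_self, Matrix.det_blockDiagonal]
  have hJ : Jmat.det = 1 := by simp [Jmat, Matrix.det_fin_two_of]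
  simp [hJ]

lemma rank_submatrix_le' {m : ℕ} {ι : Type*} [Fintype ι] [DecidableEq ι]
    (A : Matrix (Fin m) (Fin m) ℝ) (f g : ι → Fin m) :
    (A.submatrix f g).rank ≤ A.rank := by
  have h1 : A.submatrix f g =
      ((1 : Matrix (Fin m) (Fin m) ℝ).submatrix f (Equiv.refl (Fin m))) *
        (A * ((1 : Matrix (Fin m) (Fin m) ℝ).submatrix (Equiv.refl (Fin m)) g)) := by
    rw [Matrix.mul_submatrix_one, Matrix.one_submatrix_mul]
    simp
  rw [h1]
  exact le_trans (Matrix.rank_mul_le_right _ _) (Matrix.rank_mul_le_left _ _)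

/-- if `v` is antisymmetric and `J̃ + s•v` has rank `2r` for every `s ∈ ℝ`,
then every entry of `v` with both indices among `2r+1, …, n` (1-based) vanishes. -/
theorem stmt_9 (n r : ℕ) (hn : 2 * r ≤ n)
    (v : Matrix (Fin n) (Fin n) ℝ) (hv : vᵀ = -v)
    (hrank : ∀ s : ℝ, (Jtilde n r + s • v).rank = 2 * r) :
    ∀ i j : Fin n, 2 * r ≤ (i : ℕ) → 2 * r ≤ (j : ℕ) → v i j = 0 := by
  intro i j hi hj
  classical
  set f : Fin (2 * r) ⊕ Unit → Fin n :=
    Sum.elim (fun k => ⟨(k : ℕ), lt_of_lt_of_le k.isLt hn⟩) (fun _ => i) with hf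
  set g : Fin (2 * r) ⊕ Unit → Fin n :=
    Sum.elim (fun k => ⟨(k : ℕ), lt_of_lt_of_le k.isLt hn⟩) (fun _ => j) with hg
  set w : Fin (2 * r) ⊕ Unit → ℝ := fun l => v i (g l) with hw
  set N : ℝ → Matrix (Fin (2 * r) ⊕ Unit) (Fin (2 * r) ⊕ Unit) ℝ :=
    fun s => ((Jtilde n r + s • v).submatrix f g).updateRow (Sum.inr ()) w with hN
  have hJi : ∀ x : Fin n, Jtilde n r i x = 0 := by
    intro x
    simp only [Jtilde, Matrix.of_apply]
    rw [dif_neg (by omega)]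
  -- every (2r+1)-minor vanishes
  have hdet0 : ∀ s : ℝ, ((Jtilde n r + s • v).submatrix f g).det = 0 := by
    intro s
    by_contra hne
    have hu : IsUnit ((Jtilde n r + s • v).submatrix f g) :=
      (Matrix.isUnit_iff_isUnit_det _).mpr (isUnit_iff_ne_zero.mpr hne)
    have hcard : ((Jtilde n r + s • v).submatrix f g).rank
        = Fintype.card (Fin (2 * r) ⊕ Unit) := Matrix.rank_of_isUnit _ hu
    have hle : ((Jtilde n r + s • v).submatrix f g).rank ≤ (Jtilde n r + s • v).rank :=
      rank_submatrix_le' _ f g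
    rw [hrank s] at hle
    simp [Fintype.card_sum] at hcard
    omega
  -- factor out s from the last row
  have hrow : ∀ s : ℝ, (Jtilde n r + s • v).submatrix f g
      = (N s).updateRow (Sum.inr ()) (s • w) := by
    intro s
    ext a b
    rcases a with k | u
    · simp [hN, Matrix.updateRow_apply]
    · simp [hN, Matrix.updateRow_apply, hJi, hw, hf]
  have hNdet : ∀ s : ℝ, s ≠ 0 → (N s).det = 0 := by
    intro s hs
    have h1 : ((Jtilde n r + s • v).submatrix f g).det = s * (N s).det := by
      rw [hrow s, Matrix.det_updateRow_smul]
      congr 1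
      have : w = N s (Sum.inr ()) := (Matrix.updateRow_self).symm
      rw [this, Matrix.updateRow_eq_self]
    have := hdet0 s
    rw [h1] at this
    exact (mul_eq_zero.mp this).resolve_left hs
  -- continuity
  have hcont : Continuous fun s : ℝ => (N s).det := by
    apply Continuous.matrix_det
    apply continuous_matrix
    intro a b
    rcases a with k | u
    · have hval : ∀ s : ℝ, N s (Sum.inl k) b
          = Jtilde n r (f (Sum.inl k)) (g b) + s * v (f (Sum.inl k)) (g b) := by
        intro s
        simp [hN, Matrix.updateRow_apply]
      simp only [hval]
      fun_prop
    · have hval : ∀ s : ℝ, N s (Sum.inr u) b = w b := by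
        intro s
        simp [hN, Matrix.updateRow_apply]
      simp only [hval]
      exact continuous_const
  have hN0 : (N 0).det = 0 := by
    have heq : (fun s : ℝ => (N s).det) = fun _ => (0 : ℝ) :=
      Continuous.ext_on (dense_compl_singleton (0 : ℝ)) hcont continuous_const
        (fun s hs => hNdet s hs)
    exact congrFun heq 0
  -- compute N 0
  have hblock : N 0 = Matrix.fromBlocks (Jbar r) 0
      (Matrix.of fun (_ : Unit) k => w (Sum.inl k)) (Matrix.of fun (_ : Unit) (_ : Unit) => v i j) := by
    ext a b
    rcases a with k | u
    · rcases b with l | u'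
      · simp only [hN, Matrix.updateRow_apply, Matrix.submatrix_apply, Matrix.add_apply,
          Matrix.smul_apply, Matrix.fromBlocks_apply₁₁]
        rw [if_neg (by simp)]
        simp only [hf, hg, Sum.elim_inl, Jtilde, Matrix.of_apply]
        rw [dif_pos k.isLt]  -- maybe needs adjustment
        rw [dif_pos l.isLt]
        simp
      · simp only [hN, Matrix.updateRow_apply, Matrix.submatrix_apply, Matrix.add_apply,
          Matrix.smul_apply, Matrix.fromBlocks_apply₁₂]
        rw [if_neg (by simp)]
        simp only [hf, hg, Sum.elim_inl, Sum.elim_inr, Jtilde, Matrix.of_apply]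
        rw [dif_pos k.isLt, dif_neg (by omega)]
        simp
    · rcases b with l | u'
      · simp [hN, Matrix.updateRow_apply]
      · simp [hN, Matrix.updateRow_apply, hw, hg]
  rw [hblock, Matrix.det_fromBlocks_zero₁₂, det_Jbar, one_mul, Matrix.det_unique] at hN0
  simpa using hN0
end

section
/- Let r be a natural number with r ≥ 1, let l₁, …, l_r ∈ ℝ, and let A_{i,j} (for 1 ≤ i < j ≤ r) be antipinco 2×2 real matrices. Set B = T(l₁,…,l_r) + R(A_{i,j}) and suppose B ≠ 0. Then there exists s ∈ ℝ such that det(J̄_{2r} + s·B) = 0, i.e. the matrix J̄_{2r} + s·B is singular. -/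
/-! Since `J̄` and `B` are skew-symmetric and commute (`J` commutes with every antipinco block), the
matrix `J̄ B` is symmetric, and it is nonzero because `J̄² = -1`. Hence it has a nonzero real
eigenvalue `μ`, and for `s = μ⁻¹` the matrix `J̄ + s B = J̄ (1 - s J̄ B)` is singular. -/

open Matrix

/-- A 2×2 real matrix is *antipinco* if it has the form `[[a,b],[-b,a]]`. -/
def IsAntipinco (P : Matrix (Fin 2) (Fin 2) ℝ) : Prop :=
  ∃ a b : ℝ, P = !![a, b; -b, a]

/-- The `2r × 2r` block-diagonal matrix with diagonal blocks `l₁ J, …, l_r J`. -/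
def Tmat {r : ℕ} (l : Fin r → ℝ) : Matrix (Fin (2 * r)) (Fin (2 * r)) ℝ :=
  Matrix.of fun i j =>
    if (i : ℕ) / 2 = (j : ℕ) / 2 then
      l ⟨(i : ℕ) / 2, by have := i.2; omega⟩ *
        Jmat ⟨(i : ℕ) % 2, by omega⟩ ⟨(j : ℕ) % 2, by omega⟩
    else 0

namespace Matrix

variable {n 𝕜 : Type*} [Fintype n] [DecidableEq n] [RCLike 𝕜]

theorem IsHermitian.exists_det_one_sub_smul_eq_zero {M : Matrix n n 𝕜} (hM : M.IsHermitian)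
    (hM0 : M ≠ 0) : ∃ s : 𝕜, (1 - s • M).det = 0 := by
  obtain ⟨v, t, ht, hv, hMv⟩ := hM.exists_eigenvector_of_ne_zero hM0
  refine ⟨(t⁻¹ : ℝ), exists_mulVec_eq_zero_iff.mp ⟨v, hv, ?_⟩⟩
  rw [sub_mulVec, one_mulVec, smul_mulVec, hMv, RCLike.real_smul_eq_coe_smul (K := 𝕜), smul_smul,
    ← RCLike.ofReal_mul, inv_mul_cancel₀ ht, RCLike.ofReal_one, one_smul, sub_self]

theorem exists_det_add_smul_eq_zero {J B : Matrix n n ℝ} (hJJ : J * J = -1) (hJ : Jᵀ = -J)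
    (hB : Bᵀ = -B) (hJB : Commute J B) (hB0 : B ≠ 0) : ∃ s : ℝ, (J + s • B).det = 0 := by
  have hsymm : (J * B).IsHermitian := by
    rw [IsHermitian, conjTranspose_eq_transpose_of_trivial, transpose_mul, hB, hJ, neg_mul_neg,
      hJB.eq]
  have hJJB : J * (J * B) = -B := by rw [← mul_assoc, hJJ, neg_one_mul]
  obtain ⟨s, hs⟩ := hsymm.exists_det_one_sub_smul_eq_zero fun h => hB0 <| by
    rw [← neg_eq_zero, ← hJJB, h, mul_zero]
  refine ⟨s, ?_⟩
  have hfactor : J + s • B = J * (1 - s • (J * B)) := by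
    rw [mul_sub, mul_one, Matrix.mul_smul, hJJB, smul_neg, sub_neg_eq_add]
  rw [hfactor, det_mul, hs, mul_zero]

end Matrix

lemma Jmat_mul_self : Jmat * Jmat = -1 := by
  ext i j; fin_cases i <;> fin_cases j <;> simp [Jmat]

lemma Jmat_transpose : Jmatᵀ = -Jmat := by
  ext i j; fin_cases i <;> fin_cases j <;> simp [Jmat]

lemma IsAntipinco.transpose {P : Matrix (Fin 2) (Fin 2) ℝ} (hP : IsAntipinco P) :
    IsAntipinco Pᵀ := by
  obtain ⟨a, b, rfl⟩ := hP
  exact ⟨a, -b, by ext i j; fin_cases i <;> fin_cases j <;> simp⟩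

lemma IsAntipinco.commute_Jmat {P : Matrix (Fin 2) (Fin 2) ℝ} (hP : IsAntipinco P) :
    Commute Jmat P := by
  obtain ⟨a, b, rfl⟩ := hP
  ext i j; fin_cases i <;> fin_cases j <;> simp [Jmat, Matrix.mul_apply]

/-- The index `(a, p)` stands for row/column `2a + p`: `p` is the position inside the `a`-th
2×2 block. -/
def blockEquiv (r : ℕ) : Fin r × Fin 2 ≃ Fin (2 * r) :=
  finProdFinEquiv.trans (finCongr (Nat.mul_comm r 2))

section Blocks

variable {r : ℕ} {α : Type*}

@[simp] lemma blockEquiv_apply_div_two (x : Fin r × Fin 2) :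
    (blockEquiv r x : ℕ) / 2 = x.1 := by
  simp [blockEquiv, finProdFinEquiv]; omega

@[simp] lemma blockEquiv_apply_mod_two (x : Fin r × Fin 2) :
    (blockEquiv r x : ℕ) % 2 = x.2 := by
  simp [blockEquiv, finProdFinEquiv]; omega

def block (M : Matrix (Fin (2 * r)) (Fin (2 * r)) α) (a b : Fin r) :
    Matrix (Fin 2) (Fin 2) α :=
  Matrix.of fun p q => M (blockEquiv r (a, p)) (blockEquiv r (b, q))

lemma block_ext {M N : Matrix (Fin (2 * r)) (Fin (2 * r)) α}
    (h : ∀ a b, block M a b = block N a b) : M = N := by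
  ext i j
  obtain ⟨⟨a, p⟩, rfl⟩ := (blockEquiv r).surjective i
  obtain ⟨⟨b, q⟩, rfl⟩ := (blockEquiv r).surjective j
  exact congr($(h a b) p q)

@[simp] lemma block_transpose (M : Matrix (Fin (2 * r)) (Fin (2 * r)) α) (a b : Fin r) :
    block Mᵀ a b = (block M b a)ᵀ := rfl

@[simp] lemma block_neg [Neg α] (M : Matrix (Fin (2 * r)) (Fin (2 * r)) α) (a b : Fin r) :
    block (-M) a b = -block M a b := rfl

lemma block_mul [NonUnitalNonAssocSemiring α] (M N : Matrix (Fin (2 * r)) (Fin (2 * r)) α)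
    (a b : Fin r) : block (M * N) a b = ∑ c, block M a c * block N c b := by
  ext p q
  simp only [block, of_apply, mul_apply, Matrix.sum_apply]
  rw [← (blockEquiv r).sum_comp, Fintype.sum_prod_type]

lemma block_one [Zero α] [One α] (a b : Fin r) :
    block (1 : Matrix (Fin (2 * r)) (Fin (2 * r)) α) a b = if a = b then 1 else 0 := by
  split_ifs with h
  · subst h; ext p q; simp [block, one_apply]
  · ext p q; simp [block, one_apply, h]

lemma block_Jbar (a b : Fin r) : block (Jbar r) a b = if a = b then Jmat else 0 := by
  split_ifs with h
  · subst h; ext p q; simp [block, Jbar]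
  · ext p q; simp [block, Jbar, Fin.val_inj, h]

lemma block_Tmat (l : Fin r → ℝ) (a b : Fin r) :
    block (Tmat l) a b = if a = b then l a • Jmat else 0 := by
  split_ifs with h
  · subst h; ext p q; simp [block, Tmat]
  · ext p q; simp [block, Tmat, Fin.val_inj, h]

lemma block_Rblock (A : Fin r → Fin r → Matrix (Fin 2) (Fin 2) ℝ) (a b : Fin r) :
    block (Rblock A) a b = if a < b then A a b else if b < a then -(A b a)ᵀ else 0 := by
  ext p q
  simp only [block, Rblock, of_apply, blockEquiv_apply_div_two, blockEquiv_apply_mod_two,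
    Fin.val_fin_lt, Fin.eta]
  split_ifs <;> rfl

lemma block_Jbar_mul (M : Matrix (Fin (2 * r)) (Fin (2 * r)) ℝ) (a b : Fin r) :
    block (Jbar r * M) a b = Jmat * block M a b := by
  simp [block_mul, block_Jbar]

lemma block_mul_Jbar (M : Matrix (Fin (2 * r)) (Fin (2 * r)) ℝ) (a b : Fin r) :
    block (M * Jbar r) a b = block M a b * Jmat := by
  simp [block_mul, block_Jbar]

lemma commute_Jbar_of_block {M : Matrix (Fin (2 * r)) (Fin (2 * r)) ℝ}
    (h : ∀ a b, Commute Jmat (block M a b)) : Commute (Jbar r) M :=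
  block_ext fun a b => by rw [block_Jbar_mul, block_mul_Jbar, (h a b).eq]

lemma Jbar_mul_self : Jbar r * Jbar r = -1 :=
  block_ext fun a b => by
    rw [block_Jbar_mul, block_neg, block_one, block_Jbar]
    split_ifs <;> simp [Jmat_mul_self]

lemma Jbar_transpose : (Jbar r)ᵀ = -Jbar r :=
  block_ext fun a b => by
    simp only [block_transpose, block_neg, block_Jbar, eq_comm (a := b)]
    split_ifs <;> simp [Jmat_transpose]

lemma Tmat_transpose (l : Fin r → ℝ) : (Tmat l)ᵀ = -Tmat l :=
  block_ext fun a b => by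
    simp only [block_transpose, block_neg, block_Tmat, eq_comm (a := b)]
    split_ifs with h
    · subst h; simp [Jmat_transpose]
    · simp

lemma Rblock_transpose (A : Fin r → Fin r → Matrix (Fin 2) (Fin 2) ℝ) :
    (Rblock A)ᵀ = -Rblock A :=
  block_ext fun a b => by
    simp only [block_transpose, block_neg, block_Rblock]
    split_ifs with hba hab
    · exact absurd hab hba.not_gt
    all_goals simp

lemma commute_Jbar_Tmat (l : Fin r → ℝ) : Commute (Jbar r) (Tmat l) :=
  commute_Jbar_of_block fun a b => by
    rw [block_Tmat]
    split_ifs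
    exacts [(Commute.refl Jmat).smul_right _, Commute.zero_right _]

lemma commute_Jbar_Rblock {A : Fin r → Fin r → Matrix (Fin 2) (Fin 2) ℝ}
    (hA : ∀ i j : Fin r, i < j → IsAntipinco (A i j)) : Commute (Jbar r) (Rblock A) :=
  commute_Jbar_of_block fun a b => by
    rw [block_Rblock]
    split_ifs with hab hba
    · exact (hA a b hab).commute_Jmat
    · exact (hA b a hba).transpose.commute_Jmat.neg_right
    · exact Commute.zero_right _

end Blocks

theorem stmt_13_general (r : ℕ) (l : Fin r → ℝ)
    (A : Fin r → Fin r → Matrix (Fin 2) (Fin 2) ℝ)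
    (hA : ∀ i j : Fin r, i < j → IsAntipinco (A i j))
    (hB : Tmat l + Rblock A ≠ 0) :
    ∃ s : ℝ, (Jbar r + s • (Tmat l + Rblock A)).det = 0 :=
  exists_det_add_smul_eq_zero Jbar_mul_self Jbar_transpose
    (by rw [transpose_add, Tmat_transpose, Rblock_transpose, neg_add])
    ((commute_Jbar_Tmat l).add_right (commute_Jbar_Rblock hA)) hB

/-- if the `A i j` (for `i < j`) are antipinco and
`B = T(l₁,…,l_r) + R(A)` is nonzero, then `J̄₂ᵣ + s•B` is singular for some `s ∈ ℝ`. -/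
theorem stmt_13 (r : ℕ) (hr : 1 ≤ r) (l : Fin r → ℝ)
    (A : Fin r → Fin r → Matrix (Fin 2) (Fin 2) ℝ)
    (hA : ∀ i j : Fin r, i < j → IsAntipinco (A i j))
    (hB : Tmat l + Rblock A ≠ 0) :
    ∃ s : ℝ, (Jbar r + s • (Tmat l + Rblock A)).det = 0 :=
  stmt_13_general r l A hA hB
end
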